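/- If there are at most two attributes (k ≤ 2), then the maximum of ∑_{b ∈ O} r(b) over all attribute hiding schemes O is attained by a tree-structured scheme; that is, there exists a tree-structured scheme O* such that for every attribute hiding scheme O, ∑_{b ∈ O} r(b) ≤ ∑_{b ∈ O*} r(b). -/

import Mathlib

/-- A natural bundle: each attribute either takes a specific value (`some a`) or is
hidden (`none`). -/
abbrev Bundle (k : ℕ) (C : Fin k → ℕ) := ∀ i : Fin k, Option (Fin (C i))

/-- The set of instantiations belonging to a natural bundle. -/
def members {k : ℕ} {C : Fin k → ℕ} (b : Bundle k C) : Finset (∀ i : Fin k, Fin (C i)) :=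
  Finset.univ.filter fun ω => ∀ i, b i = none ∨ b i = some (ω i)

/-- An attribute hiding scheme: a finite set of natural bundles with pairwise disjoint
member sets. -/
def IsScheme {k : ℕ} {C : Fin k → ℕ} (O : Finset (Bundle k C)) : Prop :=
  ∀ b ∈ O, ∀ b' ∈ O, b ≠ b' → Disjoint (members b) (members b')

/-- `splitB b x` : the bundles obtained from `b` by revealing the hidden attribute `x`. -/
def splitB {k : ℕ} {C : Fin k → ℕ} (b : Bundle k C) (x : Fin k) : Finset (Bundle k C) :=
  Finset.univ.image fun j : Fin (C x) => Function.update b x (some j)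

/-- Tree-structured schemes: obtained from `{⊤}` (all attributes hidden) by recursively
splitting a bundle along one of its hidden attributes. -/
inductive IsTree (k : ℕ) (C : Fin k → ℕ) : Finset (Bundle k C) → Prop
  | top : IsTree k C {(fun _ => none : Bundle k C)}
  | split (O : Finset (Bundle k C)) (b : Bundle k C) (x : Fin k) :
      IsTree k C O → b ∈ O → b x = none → IsTree k C ((O.erase b) ∪ splitB b x)

/-- The pairs of distinct bidders. -/
def pairs (n : ℕ) : Finset (Fin n × Fin n) := Finset.univ.filter fun p => p.1 ≠ p.2

theorem pairs_nonempty {n : ℕ} (hn : 2 ≤ n) : (pairs n).Nonempty := by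
  refine ⟨(⟨0, by omega⟩, ⟨1, by omega⟩), ?_⟩
  simp only [pairs, Finset.mem_filter, Finset.mem_univ, true_and]
  intro h
  simpa using congrArg Fin.val h

/-- The second price of a bundle of instantiations: the max over pairs of distinct
bidders of the min of the two bidders' (additive) values for the bundle. -/
noncomputable def sp {n : ℕ} (hn : 2 ≤ n) {Ω : Type*} (v : Fin n → Ω → ℝ) (B : Finset Ω) : ℝ :=
  (pairs n).sup' (pairs_nonempty hn) fun p => min (∑ ω ∈ B, v p.1 ω) (∑ ω ∈ B, v p.2 ω)

/-- The unit bundle of an instantiation `ω`: no attribute is hidden. -/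
def unitB {k : ℕ} {C : Fin k → ℕ} (ω : ∀ i : Fin k, Fin (C i)) : Bundle k C :=
  fun i => some (ω i)

/-- The marginal revenue `r b`: the extra revenue obtained by selling `b` as a bundle
rather than selling its instantiations separately. -/
noncomputable def rMarg {k : ℕ} {C : Fin k → ℕ} {n : ℕ} (hn : 2 ≤ n)
    (v : Fin n → (∀ i : Fin k, Fin (C i)) → ℝ) (b : Bundle k C) : ℝ :=
  sp hn v (members b) - ∑ ω ∈ members b, sp hn v (members (unitB ω))

section Aux
variable {k : ℕ} {C : Fin k → ℕ}

lemma members_unitB (ω : ∀ i : Fin k, Fin (C i)) : members (unitB ω) = {ω} := by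
  ext ω'
  rw [members, Finset.mem_filter]
  simp only [members, unitB, Finset.mem_filter, Finset.mem_univ, true_and, Finset.mem_singleton]
  constructor
  · intro h
    funext i
    rcases h i with h' | h'
    · simp at h'
    · exact (Option.some.inj h').symm
  · rintro rfl i
    exact Or.inr rfl

lemma rMarg_eq_zero {n : ℕ} (hn : 2 ≤ n) (v : Fin n → (∀ i : Fin k, Fin (C i)) → ℝ)
    {b : Bundle k C} (h : ∀ i, b i ≠ none) : rMarg hn v b = 0 := by
  have hb : b = unitB (fun i => (b i).get (Option.isSome_iff_ne_none.mpr (h i))) := by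
    funext i
    simp [unitB]
  rw [hb]
  simp [rMarg, members_unitB]

lemma members_top : members (fun _ => none : Bundle k C) = Finset.univ := by
  ext ω; simp [members]

lemma members_nonempty (hC : ∀ i, 0 < C i) (b : Bundle k C) : (members b).Nonempty := by
  refine ⟨fun i => (b i).getD ⟨0, hC i⟩, ?_⟩
  simp only [members, Finset.mem_filter, Finset.mem_univ, true_and]
  intro i
  cases h : b i <;> simp

lemma scheme_top (hC : ∀ i, 0 < C i) {O : Finset (Bundle k C)} (hO : IsScheme O)
    (htop : (fun _ => none : Bundle k C) ∈ O) : O = {fun _ => none} := by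
  refine Finset.eq_singleton_iff_unique_mem.mpr ⟨htop, ?_⟩
  intro b hb
  by_contra hne
  have hd := hO b hb _ htop hne
  rw [members_top, Finset.disjoint_iff_inter_eq_empty, Finset.inter_univ] at hd
  exact (members_nonempty hC b).ne_empty hd

lemma sum_rMarg_filter {n : ℕ} (hn : 2 ≤ n) (v : Fin n → (∀ i : Fin k, Fin (C i)) → ℝ)
    (O : Finset (Bundle k C)) :
    ∑ b ∈ O, rMarg hn v b = ∑ b ∈ O.filter (fun b => ∃ i, b i = none), rMarg hn v b := by
  refine (Finset.sum_filter_of_ne ?_).symm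
  intro b _ hb
  by_contra hno
  push_neg at hno
  exact hb (rMarg_eq_zero hn v hno)

lemma tree_lines (x : Fin k) : IsTree k C (splitB (fun _ => none) x) := by
  have h := IsTree.split {(fun _ => none : Bundle k C)} _ x IsTree.top
    (Finset.mem_singleton_self _) rfl
  simpa [Finset.erase_singleton] using h

lemma tree_split_many (x : Fin k) (S : Finset (Bundle k C)) :
    ∀ O : Finset (Bundle k C), IsTree k C O → S ⊆ O → (∀ b ∈ S, b x = none) →
    IsTree k C ((O \ S) ∪ S.biUnion (fun b => splitB b x)) := by
  classical
  induction S using Finset.induction_on with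
  | empty => intro O hT _ _; simpa using hT
  | @insert b S hbS ih =>
      intro O hT hS hx
      set O' : Finset (Bundle k C) := (O.erase b) ∪ splitB b x with hO'
      have hT' : IsTree k C O' :=
        IsTree.split O b x hT (hS (Finset.mem_insert_self b S)) (hx b (Finset.mem_insert_self b S))
      have hS' : S ⊆ O' := by
        intro s hs
        exact Finset.mem_union_left _ (Finset.mem_erase.mpr
          ⟨fun h => hbS (h ▸ hs), hS (Finset.mem_insert_of_mem hs)⟩)
      have hres := ih O' hT' hS' (fun s hs => hx s (Finset.mem_insert_of_mem hs))
      have key : ∀ c ∈ splitB b x, c ∉ S := by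
        intro c hc hcS
        simp only [splitB, Finset.mem_image, Finset.mem_univ, true_and] at hc
        obtain ⟨j, rfl⟩ := hc
        have := hx _ (Finset.mem_insert_of_mem hcS)
        simp at this
      have hEq : ((O' \ S) ∪ S.biUnion (fun s => splitB s x))
          = ((O \ insert b S) ∪ (insert b S).biUnion (fun s => splitB s x)) := by
        rw [Finset.biUnion_insert]
        ext c
        simp only [hO', Finset.mem_union, Finset.mem_sdiff, Finset.mem_erase,
          Finset.mem_insert]
        by_cases hcs : c ∈ splitB b x
        · have := key c hcs
          tauto
        · tauto
      rw [hEq] at hres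
      exact hres

end Aux
section K2
variable {C : Fin 2 → ℕ}

lemma fin2_cases : ∀ (x y i : Fin 2), x ≠ y → i = x ∨ i = y := by decide

lemma mem_lines {x y : Fin 2} (hxy : x ≠ y) {b : Bundle 2 C}
    (hby : b y = none) (hbx : b x ≠ none) :
    b ∈ splitB (fun _ => none : Bundle 2 C) x := by
  obtain ⟨j, hj⟩ := Option.ne_none_iff_exists'.mp hbx
  simp only [splitB, Finset.mem_image, Finset.mem_univ, true_and]
  refine ⟨j, ?_⟩
  funext i
  rcases fin2_cases x y i hxy with rfl | rfl
  · rw [Function.update_self, hj]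
  · rw [Function.update_of_ne (Ne.symm hxy), hby]

lemma lines_prop {x y : Fin 2} (hxy : x ≠ y) {b : Bundle 2 C}
    (hb : b ∈ splitB (fun _ => none : Bundle 2 C) x) : b x ≠ none ∧ b y = none := by
  simp only [splitB, Finset.mem_image, Finset.mem_univ, true_and] at hb
  obtain ⟨j, rfl⟩ := hb
  exact ⟨by simp, by rw [Function.update_of_ne (Ne.symm hxy)]⟩

lemma cross_false (hC : ∀ i, 0 < C i) {O : Finset (Bundle 2 C)} (hO : IsScheme O)
    {x y : Fin 2} (hxy : x ≠ y) {b b' : Bundle 2 C} (hb : b ∈ O) (hb' : b' ∈ O)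
    (hbx : b x ≠ none) (hby : b y = none) (hb'x : b' x = none) : False := by
  obtain ⟨j, hj⟩ := Option.ne_none_iff_exists'.mp hbx
  have hne : b ≠ b' := by
    intro h
    rw [h, hb'x] at hj
    exact nomatch hj
  obtain ⟨ω', hω'⟩ := members_nonempty hC b'
  simp only [members, Finset.mem_filter, Finset.mem_univ, true_and] at hω'
  set ω := Function.update ω' x j with hω
  have h1 : ω ∈ members b := by
    simp only [members, Finset.mem_filter, Finset.mem_univ, true_and]
    intro i
    rcases fin2_cases x y i hxy with rfl | rfl
    · right; rw [hj, hω, Function.update_self]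
    · left; exact hby
  have h2 : ω ∈ members b' := by
    simp only [members, Finset.mem_filter, Finset.mem_univ, true_and]
    intro i
    by_cases h : i = x
    · subst h; left; exact hb'x
    · rw [hω, Function.update_of_ne h]
      exact hω' i
  exact Finset.disjoint_left.mp (hO b hb b' hb' hne) h1 h2

variable {n : ℕ} (hn : 2 ≤ n) (v : Fin n → (∀ i : Fin 2, Fin (C i)) → ℝ)

lemma sum_le_S {x : Fin 2} {F : Finset (Bundle 2 C)}
    (hsub : F ⊆ splitB (fun _ => none : Bundle 2 C) x) :
    ∑ b ∈ F, rMarg hn v b ≤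
      ∑ b ∈ (splitB (fun _ => none : Bundle 2 C) x).filter (fun b => 0 ≤ rMarg hn v b),
        rMarg hn v b := by
  classical
  have h1 : ∑ b ∈ F, rMarg hn v b ≤ ∑ b ∈ F.filter (fun b => 0 ≤ rMarg hn v b), rMarg hn v b := by
    rw [← Finset.sum_filter_add_sum_filter_not F (fun b => 0 ≤ rMarg hn v b)]
    have h2 : ∑ b ∈ F.filter (fun b => ¬ 0 ≤ rMarg hn v b), rMarg hn v b ≤ 0 :=
      Finset.sum_nonpos fun b hb => le_of_not_ge (Finset.mem_filter.mp hb).2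
    linarith
  refine h1.trans (Finset.sum_le_sum_of_subset_of_nonneg
    (Finset.filter_subset_filter _ hsub) ?_)
  intro b hb _
  exact (Finset.mem_filter.mp hb).2

lemma tree_T {x y : Fin 2} (hxy : x ≠ y) :
    ∃ T : Finset (Bundle 2 C), IsTree 2 C T ∧
      ∑ b ∈ T, rMarg hn v b =
        ∑ b ∈ (splitB (fun _ => none : Bundle 2 C) x).filter (fun b => 0 ≤ rMarg hn v b),
          rMarg hn v b := by
  classical
  set top : Bundle 2 C := fun _ => none with htop
  set L : Finset (Bundle 2 C) := splitB top x with hL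
  set N : Finset (Bundle 2 C) := L.filter (fun b => rMarg hn v b < 0) with hN
  refine ⟨(L \ N) ∪ N.biUnion (fun b => splitB b y), ?_, ?_⟩
  · exact tree_split_many y N L (tree_lines x) (Finset.filter_subset _ _)
      (fun b hb => (lines_prop hxy (Finset.filter_subset _ _ hb)).2)
  · have hdisj : Disjoint (L \ N) (N.biUnion fun b => splitB b y) := by
      rw [Finset.disjoint_left]
      intro c hc1 hc2
      have hcy : c y = none :=
        (lines_prop hxy (Finset.sdiff_subset hc1)).2
      simp only [Finset.mem_biUnion] at hc2
      obtain ⟨s, _, hcs⟩ := hc2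
      simp only [splitB, Finset.mem_image, Finset.mem_univ, true_and] at hcs
      obtain ⟨j, rfl⟩ := hcs
      rw [Function.update_self] at hcy
      exact nomatch hcy
    rw [Finset.sum_union hdisj]
    have hz : ∑ b ∈ N.biUnion (fun b => splitB b y), rMarg hn v b = 0 := by
      apply Finset.sum_eq_zero
      intro c hc
      simp only [Finset.mem_biUnion] at hc
      obtain ⟨s, hs, hcs⟩ := hc
      simp only [splitB, Finset.mem_image, Finset.mem_univ, true_and] at hcs
      obtain ⟨j, rfl⟩ := hcs
      have hsx : s x ≠ none := (lines_prop hxy (Finset.filter_subset _ _ hs)).1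
      refine rMarg_eq_zero hn v ?_
      intro i
      rcases fin2_cases x y i hxy with rfl | rfl
      · rw [Function.update_of_ne hxy]; exact hsx
      · rw [Function.update_self]; exact fun h => nomatch h
    rw [hz, add_zero]
    congr 1
    ext c
    simp only [hN, Finset.mem_sdiff, Finset.mem_filter, not_and, not_lt]
    constructor
    · rintro ⟨hcL, h⟩
      exact ⟨hcL, h hcL⟩
    · rintro ⟨hcL, h⟩
      exact ⟨hcL, fun _ => h⟩

end K2
/-- With at most two attributes, the maximum of `∑_{b ∈ O} r b` over all attribute
hiding schemes is attained by a tree-structured scheme. -/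
theorem stmt7 (k : ℕ) (hk : k ≤ 2) (C : Fin k → ℕ) (hC : ∀ i, 2 ≤ C i)
    (n : ℕ) (hn : 2 ≤ n) (v : Fin n → (∀ i : Fin k, Fin (C i)) → ℝ) :
    ∃ Ostar : Finset (Bundle k C), IsTree k C Ostar ∧
      ∀ O : Finset (Bundle k C), IsScheme O →
        ∑ b ∈ O, rMarg hn v b ≤ ∑ b ∈ Ostar, rMarg hn v b := by
  classical
  have hC0 : ∀ i, 0 < C i := fun i => lt_of_lt_of_le two_pos (hC i)
  interval_cases k
  · -- k = 0
    refine ⟨{fun _ => none}, IsTree.top, ?_⟩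
    intro O _
    have h0 : ∀ b : Bundle 0 C, rMarg hn v b = 0 :=
      fun b => rMarg_eq_zero hn v (fun i => i.elim0)
    simp [h0]
  · -- k = 1
    have hsub : ∀ (O : Finset (Bundle 1 C)), IsScheme O →
        O.filter (fun b => ∃ i, b i = none) ⊆ {(fun _ => none : Bundle 1 C)} := by
      intro O _ b hb
      obtain ⟨-, i, hi⟩ := Finset.mem_filter.mp hb
      have hbt : b = (fun _ => none : Bundle 1 C) := by
        funext j
        rw [Subsingleton.elim j i, hi]
      simp [hbt]
    by_cases hpos : 0 ≤ rMarg hn v (fun _ => none : Bundle 1 C)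
    · refine ⟨{fun _ => none}, IsTree.top, ?_⟩
      intro O hO
      rw [sum_rMarg_filter hn v O, Finset.sum_singleton]
      rcases Finset.subset_singleton_iff.mp (hsub O hO) with h | h <;> rw [h]
      · simpa using hpos
      · rw [Finset.sum_singleton]
    · refine ⟨splitB (fun _ => none) 0, tree_lines 0, ?_⟩
      intro O hO
      have hz : ∑ b ∈ splitB (fun _ => none : Bundle 1 C) 0, rMarg hn v b = 0 := by
        apply Finset.sum_eq_zero
        intro c hc
        simp only [splitB, Finset.mem_image, Finset.mem_univ, true_and] at hc
        obtain ⟨j, rfl⟩ := hc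
        refine rMarg_eq_zero hn v ?_
        intro i
        rw [Subsingleton.elim i (0 : Fin 1), Function.update_self]
        exact fun h => nomatch h
      rw [hz, sum_rMarg_filter hn v O]
      rcases Finset.subset_singleton_iff.mp (hsub O hO) with h | h <;> rw [h]
      · simp
      · rw [Finset.sum_singleton]; linarith
  · -- k = 2
    set top : Bundle 2 C := fun _ => none with htop
    set S : Fin 2 → ℝ := fun x =>
      ∑ b ∈ (splitB top x).filter (fun b => 0 ≤ rMarg hn v b), rMarg hn v b with hSdef
    have hbound : ∀ O : Finset (Bundle 2 C), IsScheme O →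
        ∑ b ∈ O, rMarg hn v b ≤ max (rMarg hn v top) (max (S 0) (S 1)) := by
      intro O hO
      by_cases htopO : top ∈ O
      · rw [scheme_top hC0 hO htopO, Finset.sum_singleton]
        exact le_max_left _ _
      · rw [sum_rMarg_filter hn v O]
        set F := O.filter (fun b => ∃ i, b i = none) with hF
        have hFO : ∀ b ∈ F, b ∈ O := fun b hb => (Finset.mem_filter.mp hb).1
        have hnottop : ∀ b ∈ F, ¬(b 0 = none ∧ b 1 = none) := by
          rintro b hb ⟨h0, h1⟩
          apply htopO
          have hbt : b = top := by
            funext i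
            rcases fin2_cases 0 1 i (by decide) with rfl | rfl
            · exact h0
            · exact h1
          rw [← hbt]
          exact hFO b hb
        have hline : ∀ b ∈ F, (b 0 ≠ none ∧ b 1 = none) ∨ (b 0 = none ∧ b 1 ≠ none) := by
          intro b hb
          obtain ⟨-, i, hi⟩ := Finset.mem_filter.mp hb
          have hnt := hnottop b hb
          rcases fin2_cases 0 1 i (by decide) with rfl | rfl
          · right; exact ⟨hi, fun h1 => hnt ⟨hi, h1⟩⟩
          · left; exact ⟨fun h0 => hnt ⟨h0, hi⟩, hi⟩
        by_cases hex : ∃ b ∈ F, b 0 ≠ none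
        · have hsub : F ⊆ splitB top 0 := by
            intro b hb
            rcases hline b hb with ⟨h0, h1⟩ | ⟨h0, h1⟩
            · exact mem_lines (by decide) h1 h0
            · exfalso
              obtain ⟨c, hc, hc0⟩ := hex
              have hc1 : c 1 = none := by
                rcases hline c hc with ⟨_, h⟩ | ⟨h, _⟩
                · exact h
                · exact absurd h hc0
              exact cross_false hC0 hO (by decide : (0 : Fin 2) ≠ 1)
                (hFO c hc) (hFO b hb) hc0 hc1 h0
          exact (sum_le_S hn v hsub).trans ((le_max_left _ _).trans (le_max_right _ _))
        · push_neg at hex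
          have hsub : F ⊆ splitB top 1 := by
            intro b hb
            have h0 : b 0 = none := hex b hb
            have h1 : b 1 ≠ none := by
              rcases hline b hb with ⟨h, _⟩ | ⟨_, h⟩
              · exact absurd h0 h
              · exact h
            exact mem_lines (by decide : (1 : Fin 2) ≠ 0) h0 h1
          exact (sum_le_S hn v hsub).trans ((le_max_right _ _).trans (le_max_right _ _))
    rcases le_total (max (S 0) (S 1)) (rMarg hn v top) with h | h
    · refine ⟨{top}, IsTree.top, ?_⟩
      intro O hO
      rw [Finset.sum_singleton]
      exact (hbound O hO).trans (by rw [max_eq_left h])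
    · rcases le_total (S 1) (S 0) with h2 | h2
      · obtain ⟨T, hT, hTs⟩ := tree_T hn v (by decide : (0 : Fin 2) ≠ 1)
        refine ⟨T, hT, ?_⟩
        intro O hO
        refine (hbound O hO).trans ?_
        rw [max_eq_right h, max_eq_left h2, hSdef]
        exact le_of_eq hTs.symm
      · obtain ⟨T, hT, hTs⟩ := tree_T hn v (by decide : (1 : Fin 2) ≠ 0)
        refine ⟨T, hT, ?_⟩
        intro O hO
        refine (hbound O hO).trans ?_
        rw [max_eq_right h, max_eq_right h2, hSdef]
        exact le_of_eq hTs.symm
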